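/- arXiv:1911.08148 — 3 statements merged into one kernel-verified Lean document; each statement's English description precedes it below -/
import Mathlib

section
/- Let Δ, D, Ψ be n×n real symmetric matrices, μ ∈ ℝ, z ∈ ℝⁿ, G = μ·Δ + Ψ + (1−μ)·D, and define f(α) = α²·zᵀ(Δ−D)z + α·zᵀ(D+Ψ−2G)z. Then the derivative of f at α = μ equals −zᵀ(Ψ+D)z; moreover, if Ψ + D is positive definite and z ≠ 0, then f′(μ) < 0. -/
open Matrix

/-- Paper eq. (49) in Lemma 3: the derivative of the UDP attacker objective at
the nominal packet-loss mean `α = μ` equals `-zᵀ(Ψ+D)z`, which is strictly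
negative when `Ψ + D` is positive definite and `z ≠ 0`. -/
theorem udp_deriv_at_nominal_mean {n : ℕ}
    (Δ D Ψ : Matrix (Fin n) (Fin n) ℝ)
    (hΔ : Δ.IsSymm) (hD : D.IsSymm) (hΨ : Ψ.IsSymm)
    (μ : ℝ) (z : Fin n → ℝ)
    (G : Matrix (Fin n) (Fin n) ℝ)
    (hG : G = μ • Δ + Ψ + (1 - μ) • D)
    (f : ℝ → ℝ)
    (hf : ∀ α : ℝ, f α = α ^ 2 * (z ⬝ᵥ ((Δ - D) *ᵥ z))
        + α * (z ⬝ᵥ ((D + Ψ - (2 : ℝ) • G) *ᵥ z))) :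
    deriv f μ = -(z ⬝ᵥ ((Ψ + D) *ᵥ z)) ∧
    ((Ψ + D).PosDef → z ≠ 0 → deriv f μ < 0) := by
  have hfe : f = fun α => α ^ 2 * (z ⬝ᵥ ((Δ - D) *ᵥ z))
      + α * (z ⬝ᵥ ((D + Ψ - (2 : ℝ) • G) *ᵥ z)) := funext hf
  have hderiv : deriv f μ = 2 * μ * (z ⬝ᵥ ((Δ - D) *ᵥ z))
      + (z ⬝ᵥ ((D + Ψ - (2 : ℝ) • G) *ᵥ z)) := by
    subst hfe
    have h1 : HasDerivAt (fun α : ℝ => α ^ 2 * (z ⬝ᵥ ((Δ - D) *ᵥ z))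
        + α * (z ⬝ᵥ ((D + Ψ - (2 : ℝ) • G) *ᵥ z)))
        (2 * μ * (z ⬝ᵥ ((Δ - D) *ᵥ z)) + 1 * (z ⬝ᵥ ((D + Ψ - (2 : ℝ) • G) *ᵥ z))) μ := by
      have := ((hasDerivAt_pow 2 μ).mul_const (z ⬝ᵥ ((Δ - D) *ᵥ z))).add
        ((hasDerivAt_id μ).mul_const (z ⬝ᵥ ((D + Ψ - (2 : ℝ) • G) *ᵥ z)))
      simpa [mul_comm, mul_assoc, Pi.add_def] using this
    rw [h1.deriv]; ring
  have key : deriv f μ = -(z ⬝ᵥ ((Ψ + D) *ᵥ z)) := by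
    rw [hderiv, hG]
    simp [Matrix.sub_mulVec, Matrix.add_mulVec, Matrix.smul_mulVec,
      dotProduct_add, dotProduct_sub, dotProduct_smul, smul_eq_mul]
    ring
  refine ⟨key, fun hpd hz => ?_⟩
  rw [key, neg_lt_zero]
  simpa [dotProduct_mulVec, Matrix.dotProduct_mulVec] using (Matrix.posDef_iff_dotProduct_mulVec.mp hpd).2 hz
end

section
/- Let Δ, D, Ψ be n×n real symmetric matrices with D and Ψ positive definite, let μ ∈ (0,1), let z ∈ ℝⁿ with z ≠ 0, let G = μ·Δ + Ψ + (1−μ)·D, and define f(α) = α²·zᵀ(Δ−D)z + α·zᵀ(D+Ψ−2G)z. Then there exists α ∈ [0,1) with f(α) < f(μ); that is, the nominal packet-loss mean μ does not minimise the attacker's UDP objective over [0,1). -/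
open Matrix

/-- Paper Lemma 3: the nominal packet-loss mean `μ` does not minimise the UDP
attacker objective over `[0,1)`. -/
theorem udp_nominal_mean_not_minimiser {n : ℕ}
    (Δ D Ψ : Matrix (Fin n) (Fin n) ℝ)
    (hΔ : Δ.IsSymm) (hD : D.IsSymm) (hΨ : Ψ.IsSymm)
    (hDpd : D.PosDef) (hΨpd : Ψ.PosDef)
    (μ : ℝ) (hμ : μ ∈ Set.Ioo (0 : ℝ) 1)
    (z : Fin n → ℝ) (hz : z ≠ 0)
    (G : Matrix (Fin n) (Fin n) ℝ)
    (hG : G = μ • Δ + Ψ + (1 - μ) • D)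
    (f : ℝ → ℝ)
    (hf : ∀ α : ℝ, f α = α ^ 2 * (z ⬝ᵥ ((Δ - D) *ᵥ z))
        + α * (z ⬝ᵥ ((D + Ψ - (2 : ℝ) • G) *ᵥ z))) :
    ∃ α ∈ Set.Ico (0 : ℝ) 1, f α < f μ := by
  obtain ⟨hμ0, hμ1⟩ := hμ
  set a : ℝ := z ⬝ᵥ ((Δ - D) *ᵥ z) with ha
  set b : ℝ := z ⬝ᵥ ((D + Ψ - (2 : ℝ) • G) *ᵥ z) with hb
  have hDz : 0 < z ⬝ᵥ (D *ᵥ z) := hDpd.dotProduct_mulVec_pos hz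
  have hΨz : 0 < z ⬝ᵥ (Ψ *ᵥ z) := hΨpd.dotProduct_mulVec_pos hz
  set c : ℝ := z ⬝ᵥ (Ψ *ᵥ z) + z ⬝ᵥ (D *ᵥ z) with hcdef
  have hc : 0 < c := by positivity
  have key : 2 * a * μ + b = -c := by
    simp only [ha, hb, hcdef, hG, sub_mulVec, add_mulVec, smul_mulVec,
      dotProduct_sub, dotProduct_add, dotProduct_smul, smul_eq_mul]
    ring
  set ε : ℝ := min ((1 - μ) / 2) (c / (2 * (|a| + 1))) with hε
  have hεpos : 0 < ε := by
    exact lt_min (by linarith) (by positivity)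
  have hε1 : ε ≤ (1 - μ) / 2 := min_le_left _ _
  have hε2 : ε ≤ c / (2 * (|a| + 1)) := min_le_right _ _
  have habs : a ≤ |a| := le_abs_self a
  have hden : (0:ℝ) < 2 * (|a| + 1) := by positivity
  have hεa : ε * a < c := by
    have h1 : ε * (2 * (|a| + 1)) ≤ c := by
      rw [← le_div_iff₀ hden]; exact hε2
    nlinarith [abs_nonneg a]
  refine ⟨μ + ε, ⟨by linarith, by linarith⟩, ?_⟩
  rw [hf, hf]
  have expand : (μ + ε) ^ 2 * a + (μ + ε) * b - (μ ^ 2 * a + μ * b)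
      = ε * ((2 * a * μ + b) + ε * a) := by ring
  nlinarith [mul_pos hεpos hc]
end

section
/- Let Δ be an n×n real symmetric positive semidefinite matrix, Ψ an n×n real positive definite matrix, μ > 1/2, and z ∈ ℝⁿ with z ≠ 0, and define g(α) = α²·zᵀΔz − α·zᵀ(2μΔ+Ψ)z. Then g(1) < 0 = g(0), and g(α) ≤ 0 for all α ∈ [0,1]; hence the optimal TCP attack over [0,1] is to drop all packets (α = 0). -/
open Matrix

/-- Paper claim for `μ > 1/2`: `g(1) < 0 = g(0)` and `g ≤ 0` on `[0,1]`, so the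
optimal TCP attack over `[0,1]` is to drop all packets (`α = 0`). -/
theorem tcp_drop_all_packets_optimal {n : ℕ}
    (Δ Ψ : Matrix (Fin n) (Fin n) ℝ)
    (hΔ : Δ.PosSemidef) (hΨ : Ψ.PosDef)
    (μ : ℝ) (hμ : 1 / 2 < μ)
    (z : Fin n → ℝ) (hz : z ≠ 0)
    (g : ℝ → ℝ)
    (hg : ∀ α : ℝ, g α = α ^ 2 * (z ⬝ᵥ (Δ *ᵥ z))
        - α * (z ⬝ᵥ (((2 * μ) • Δ + Ψ) *ᵥ z))) :
    g 1 < 0 ∧ g 0 = 0 ∧ ∀ α ∈ Set.Icc (0 : ℝ) 1, g α ≤ 0 := by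
  have ha : 0 ≤ z ⬝ᵥ (Δ *ᵥ z) := by simpa using hΔ.dotProduct_mulVec_nonneg z
  have hb : 0 < z ⬝ᵥ (Ψ *ᵥ z) := by simpa using hΨ.dotProduct_mulVec_pos hz
  have hsplit : ∀ α : ℝ, g α = α * (z ⬝ᵥ (Δ *ᵥ z)) * (α - 2 * μ)
      - α * (z ⬝ᵥ (Ψ *ᵥ z)) := by
    intro α
    rw [hg α, add_mulVec, smul_mulVec, dotProduct_add, dotProduct_smul, smul_eq_mul]
    ring
  refine ⟨?_, ?_, ?_⟩
  · rw [hsplit 1]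
    have : (1 : ℝ) - 2 * μ < 0 := by linarith
    nlinarith
  · rw [hsplit 0]; ring
  · intro α hα
    obtain ⟨h0, h1⟩ := hα
    rw [hsplit α]
    have h2 : α - 2 * μ ≤ 0 := by linarith
    nlinarith [mul_nonneg (mul_nonneg h0 ha) (neg_nonneg.mpr h2), mul_nonneg h0 hb.le]
end
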